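/- Let Φ : X → L(H,K) be a completely positive map on a full Hilbert A-module X with underlying completely positive map φ, and let (π_φ, H_φ, V_φ) be the Stinespring dilation of φ (so φ(a) = V_φ* π_φ(a) V_φ and [π_φ(A)V_φ H] = H_φ). Then the formula π_Φ(x)(Σᵢ π_φ(aᵢ)V_φ hᵢ) = Σᵢ Φ(x aᵢ) hᵢ gives a well-defined bounded operator π_Φ(x) : H_φ → K_Φ := [Φ(X)H] for each x ∈ X, and π_Φ(x)* π_Φ(y) = π_φ(⟨x,y⟩) for all x,y ∈ X, i.e., π_Φ is a representation of X on H_φ and K_Φ. -/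

import Mathlib

noncomputable section

open ContinuousLinearMap

/-- An element of the form `star c * c` (positivity in a star ring). -/
def StarPos {B : Type*} [Mul B] [Star B] (b : B) : Prop := ∃ c : B, b = star c * c

/-- Complete positivity of a `ℂ`-linear map between star rings. -/
def IsCPMap {A B : Type*} [NonUnitalRing A] [StarRing A] [Module ℂ A]
    [NonUnitalRing B] [StarRing B] [Module ℂ B] (φ : A →ₗ[ℂ] B) : Prop :=
  ∀ (n : ℕ) (M : Matrix (Fin n) (Fin n) A), StarPos M → StarPos (M.map ⇑φ)

/-- given a completely positive map `Φ` on a full Hilbert `A`-module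
`X` with underlying map `φ` and the minimal Stinespring dilation `(π_φ, H_φ, V_φ)`
of `φ`, the formula `π_Φ(x)(Σ π_φ(aᵢ)V_φ hᵢ) = Σ Φ(x aᵢ)hᵢ` defines a bounded
operator `π_Φ(x) : H_φ → K_Φ = [Φ(X)H]` and `π_Φ(x)*π_Φ(y) = π_φ(⟨x,y⟩)`, i.e.
`π_Φ` is a representation of `X`. -/
local notation "⟪" x ", " y "⟫" => @inner ℂ _ _ x y

theorem stmt_10
    {A : Type*} [NormedRing A] [StarRing A] [CStarRing A] [NormedAlgebra ℂ A]
    [CompleteSpace A] [StarModule ℂ A]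
    {H K Hφ : Type*} [NormedAddCommGroup H] [InnerProductSpace ℂ H] [CompleteSpace H]
    [NormedAddCommGroup K] [InnerProductSpace ℂ K] [CompleteSpace K]
    [NormedAddCommGroup Hφ] [InnerProductSpace ℂ Hφ] [CompleteSpace Hφ]
    {X : Type*} (E : X → X → A) (act : X → A → X)
    (hfull : (Submodule.span ℂ {a : A | ∃ x y, a = E x y}).topologicalClosure = ⊤)
    (hE_star : ∀ x y, star (E x y) = E y x)
    (hE_act : ∀ x y a, E x (act y a) = E x y * a)
    (Φ : X → H →L[ℂ] K) (φ : A →ₗ[ℂ] (H →L[ℂ] H)) (hcp : IsCPMap φ)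
    (hΦ : ∀ x y, adjoint (Φ x) ∘L Φ y = φ (E x y))
    (πφ : A →⋆ₐ[ℂ] (Hφ →L[ℂ] Hφ)) (Vφ : H →L[ℂ] Hφ)
    (hSt : ∀ a, φ a = adjoint Vφ ∘L πφ a ∘L Vφ)
    (hmin : (Submodule.span ℂ {ξ : Hφ | ∃ a h, ξ = πφ a (Vφ h)}).topologicalClosure = ⊤) :
    ∃ πΦ : X → Hφ →L[ℂ] K,
      (∀ (x : X) (n : ℕ) (a : Fin n → A) (h : Fin n → H),
          πΦ x (∑ i, πφ (a i) (Vφ (h i))) = ∑ i, Φ (act x (a i)) (h i)) ∧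
        (∀ (x : X) (ξ : Hφ),
          πΦ x ξ ∈ (Submodule.span ℂ {k : K | ∃ y h, k = Φ y h}).topologicalClosure) ∧
        ∀ x y, adjoint (πΦ x) ∘L πΦ y = πφ (E x y) := by
  classical
  -- inner product formula for E on "shifted" elements
  have hEab : ∀ x y a b, E (act x a) (act y b) = star a * (E x y * b) := by
    intro x y a b
    calc E (act x a) (act y b) = star (E (act y b) (act x a)) := (hE_star _ _).symm
      _ = star (E (act y b) x * a) := by rw [hE_act]
      _ = star a * star (E (act y b) x) := by rw [star_mul]
      _ = star a * E x (act y b) := by rw [← hE_star x (act y b), star_star]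
      _ = star a * (E x y * b) := by rw [hE_act]
  -- the key single-term inner product identity
  have key : ∀ (x y : X) (a b : A) (h k : H),
      ⟪Φ (act x a) h, Φ (act y b) k⟫ = ⟪πφ a (Vφ h), πφ (E x y) (πφ b (Vφ k))⟫ := by
    intro x y a b h k
    have h1 : ⟪Φ (act x a) h, Φ (act y b) k⟫
        = ⟪h, (adjoint (Φ (act x a)) ∘L Φ (act y b)) k⟫ := by
      rw [comp_apply, adjoint_inner_right]
    rw [h1, hΦ, hEab, hSt]
    have h2 : πφ (star a * (E x y * b)) = adjoint (πφ a) ∘L (πφ (E x y) ∘L πφ b) := by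
      ext v
      simp [map_mul, ← star_eq_adjoint, ← map_star πφ a]
    rw [comp_apply, comp_apply, h2, adjoint_inner_right, comp_apply, comp_apply,
      adjoint_inner_right]
  -- sum version
  have keyS : ∀ (x y : X) (n m : ℕ) (a : Fin n → A) (h : Fin n → H)
      (b : Fin m → A) (k : Fin m → H),
      ⟪∑ i, Φ (act x (a i)) (h i), ∑ j, Φ (act y (b j)) (k j)⟫
        = ⟪∑ i, πφ (a i) (Vφ (h i)), πφ (E x y) (∑ j, πφ (b j) (Vφ (k j)))⟫ := by
    intro x y n m a h b k
    rw [map_sum, sum_inner, sum_inner]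
    refine Finset.sum_congr rfl fun i _ => ?_
    rw [inner_sum, inner_sum]
    exact Finset.sum_congr rfl fun j _ => key x y (a i) (b j) (h i) (k j)
  -- well-definedness
  have wd : ∀ (x : X) (n m : ℕ) (a : Fin n → A) (h : Fin n → H)
      (b : Fin m → A) (k : Fin m → H),
      (∑ i, πφ (a i) (Vφ (h i))) = ∑ j, πφ (b j) (Vφ (k j)) →
      (∑ i, Φ (act x (a i)) (h i)) = ∑ j, Φ (act x (b j)) (k j) := by
    intro x n m a h b k heq
    set u := ∑ i, Φ (act x (a i)) (h i) with hu
    set v := ∑ j, Φ (act x (b j)) (k j) with hv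
    have h1 := keyS x x n n a h a h
    have h2 := keyS x x n m a h b k
    have h3 := keyS x x m n b k a h
    have h4 := keyS x x m m b k b k
    rw [heq] at h1 h2 h3
    have : ⟪u - v, u - v⟫ = 0 := by
      rw [inner_sub_left, inner_sub_right, inner_sub_right, ← hu, ← hv] at *
      rw [h1, h2, h3, h4]; ring
    rw [inner_self_eq_zero, sub_eq_zero] at this
    exact this
  -- the dense submodule of representable vectors
  set gen : Set Hφ := {ξ : Hφ | ∃ a h, ξ = πφ a (Vφ h)} with hgen
  set S : Submodule ℂ Hφ := Submodule.span ℂ gen with hS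
  have mem_rep : ∀ ξ : Hφ, ξ ∈ S → ∃ n : ℕ, ∃ a : Fin n → A, ∃ h : Fin n → H,
      ξ = ∑ i, πφ (a i) (Vφ (h i)) := by
    intro ξ hξ
    induction hξ using Submodule.span_induction with
    | mem w hw =>
      obtain ⟨a, h, rfl⟩ := hw
      exact ⟨1, fun _ => a, fun _ => h, by simp⟩
    | zero => exact ⟨0, finZeroElim, finZeroElim, by simp⟩
    | add u v hu hv ihu ihv =>
      obtain ⟨n, a, h, rfl⟩ := ihu
      obtain ⟨m, b, k, rfl⟩ := ihv
      refine ⟨n + m, Fin.append a b, Fin.append h k, ?_⟩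
      rw [Fin.sum_univ_add]
      simp [Fin.append_left, Fin.append_right]
    | smul c u hu ihu =>
      obtain ⟨n, a, h, rfl⟩ := ihu
      refine ⟨n, a, fun i => c • h i, ?_⟩
      rw [Finset.smul_sum]
      simp [map_smul]
  have hrepS : ∀ s : S, ∃ n : ℕ, ∃ a : Fin n → A, ∃ h : Fin n → H,
      (s : Hφ) = ∑ i, πφ (a i) (Vφ (h i)) := fun s => mem_rep s s.2
  choose nn aa hh hrep using hrepS
  -- the function on S
  set F : X → S → K := fun x s => ∑ i, Φ (act x (aa s i)) (hh s i) with hF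
  have Fval : ∀ (x : X) (s : S) (n : ℕ) (a : Fin n → A) (h : Fin n → H),
      (s : Hφ) = ∑ i, πφ (a i) (Vφ (h i)) → F x s = ∑ i, Φ (act x (a i)) (h i) :=
    fun x s n a h he => wd x _ _ _ _ _ _ ((hrep s).symm.trans he)
  -- main inner product identity on S
  have keyF : ∀ (x y : X) (s t : S), ⟪F x s, F y t⟫ = ⟪(s : Hφ), πφ (E x y) (t : Hφ)⟫ := by
    intro x y s t
    have := keyS x y (nn s) (nn t) (aa s) (hh s) (aa t) (hh t)
    rw [hF]
    rw [this, ← hrep s, ← hrep t]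
  -- linearity
  have Fadd : ∀ (x : X) (s t : S), F x (s + t) = F x s + F x t := by
    intro x s t
    have h1 : ((s + t : S) : Hφ) = ∑ i : Fin (nn s + nn t),
        πφ (Fin.append (aa s) (aa t) i) (Vφ (Fin.append (hh s) (hh t) i)) := by
      rw [Fin.sum_univ_add]
      simp only [Fin.append_left, Fin.append_right]
      rw [Submodule.coe_add, hrep s, hrep t]
    rw [Fval x _ _ _ _ h1, Fin.sum_univ_add]
    simp only [Fin.append_left, Fin.append_right]
    rfl
  have Fsmul : ∀ (x : X) (c : ℂ) (s : S), F x (c • s) = c • F x s := by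
    intro x c s
    have h1 : ((c • s : S) : Hφ) = ∑ i, πφ (aa s i) (Vφ (c • hh s i)) := by
      rw [Submodule.coe_smul, hrep s, Finset.smul_sum]
      simp [map_smul]
    rw [Fval x _ _ _ _ h1, hF, Finset.smul_sum]
    exact Finset.sum_congr rfl fun i _ => map_smul (Φ (act x (aa s i))) c (hh s i)
  -- boundedness
  have Fbound : ∀ (x : X) (s : S), ‖F x s‖ ≤ Real.sqrt ‖πφ (E x x)‖ * ‖(s : Hφ)‖ := by
    intro x s
    have h1 : ‖F x s‖ ^ 2 = ‖⟪F x s, F x s⟫‖ := by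
      rw [@inner_self_eq_norm_sq_to_K ℂ]
      simp [norm_pow]
    have h2 : ‖⟪(s : Hφ), πφ (E x x) (s : Hφ)⟫‖ ≤ ‖πφ (E x x)‖ * ‖(s : Hφ)‖ ^ 2 := by
      calc ‖⟪(s : Hφ), πφ (E x x) (s : Hφ)⟫‖
          ≤ ‖(s : Hφ)‖ * ‖πφ (E x x) (s : Hφ)‖ := norm_inner_le_norm _ _
        _ ≤ ‖(s : Hφ)‖ * (‖πφ (E x x)‖ * ‖(s : Hφ)‖) := by
            gcongr; exact le_opNorm _ _
        _ = ‖πφ (E x x)‖ * ‖(s : Hφ)‖ ^ 2 := by ring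
    have h3 : ‖F x s‖ ^ 2 ≤ ‖πφ (E x x)‖ * ‖(s : Hφ)‖ ^ 2 := by
      rw [h1, keyF x x s s]; exact h2
    have h4 := Real.sqrt_le_sqrt h3
    rwa [Real.sqrt_sq (norm_nonneg _), Real.sqrt_mul (norm_nonneg _),
      Real.sqrt_sq (norm_nonneg _)] at h4
  -- continuous linear map on S
  set f : X → (S →L[ℂ] K) := fun x => LinearMap.mkContinuous
    { toFun := F x, map_add' := Fadd x, map_smul' := Fsmul x }
    (Real.sqrt ‖πφ (E x x)‖) (fun s => Fbound x s) with hf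
  have fapp : ∀ (x : X) (s : S), f x s = F x s := fun _ _ => rfl
  -- density
  have hd : Dense (S : Set Hφ) := by
    have : (S.topologicalClosure : Set Hφ) = closure (S : Set Hφ) :=
      Submodule.topologicalClosure_coe S
    rw [dense_iff_closure_eq, ← this, hS, hmin]
    rfl
  have hdr : DenseRange ((S.subtypeL : S →L[ℂ] Hφ) : S → Hφ) := hd.denseRange_val
  set πΦ : X → Hφ →L[ℂ] K := fun x =>
    (f x).extend S.subtypeL with hπΦ
  have πΦ_on_S : ∀ (x : X) (s : S), πΦ x (s : Hφ) = F x s := fun x s =>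
    ContinuousLinearMap.extend_eq (f := f x) (e := S.subtypeL) hdr
      isUniformEmbedding_subtype_val.isUniformInducing s
  refine ⟨πΦ, ?_, ?_, ?_⟩
  · -- formula on sums
    intro x n a h
    have hmem : (∑ i, πφ (a i) (Vφ (h i))) ∈ S := by
      refine Submodule.sum_mem _ fun i _ => Submodule.subset_span ?_
      exact ⟨a i, h i, rfl⟩
    have := πΦ_on_S x ⟨_, hmem⟩
    rw [this, Fval x ⟨_, hmem⟩ n a h rfl]
  · -- range condition
    intro x ξ
    set M := (Submodule.span ℂ {k : K | ∃ y h, k = Φ y h}).topologicalClosure with hM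
    have hclosed : IsClosed {η : Hφ | πΦ x η ∈ M} := by
      have : IsClosed (M : Set K) := Submodule.isClosed_topologicalClosure _
      exact this.preimage (πΦ x).continuous
    have hsub : (S : Set Hφ) ⊆ {η : Hφ | πΦ x η ∈ M} := by
      intro η hη
      have : πΦ x η = F x ⟨η, hη⟩ := πΦ_on_S x ⟨η, hη⟩
      rw [Set.mem_setOf_eq, this]
      refine Submodule.sum_mem _ fun i _ => ?_
      exact Submodule.le_topologicalClosure _
        (Submodule.subset_span ⟨act x (aa ⟨η, hη⟩ i), hh ⟨η, hη⟩ i, rfl⟩)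
    have : closure (S : Set Hφ) ⊆ {η : Hφ | πΦ x η ∈ M} :=
      hclosed.closure_subset_iff.2 hsub
    exact this (hd.closure_eq ▸ Set.mem_univ ξ)
  · -- adjoint identity
    intro x y
    have hinner : ∀ ξ η : Hφ, ⟪πΦ x ξ, πΦ y η⟫ = ⟪ξ, πφ (E x y) η⟫ := by
      have hfun : (fun p : Hφ × Hφ => ⟪πΦ x p.1, πΦ y p.2⟫)
          = fun p : Hφ × Hφ => ⟪p.1, πφ (E x y) p.2⟫ := by
        refine Continuous.ext_on ((hd.prod hd)) ?_ ?_ ?_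
        · exact Continuous.inner ((πΦ x).continuous.comp continuous_fst)
            ((πΦ y).continuous.comp continuous_snd)
        · exact Continuous.inner continuous_fst
            ((πφ (E x y)).continuous.comp continuous_snd)
        · rintro ⟨ξ, η⟩ ⟨hξ, hη⟩
          simp only
          rw [πΦ_on_S x ⟨ξ, hξ⟩, πΦ_on_S y ⟨η, hη⟩, keyF]
      intro ξ η
      exact congrFun hfun (ξ, η)
    ext η
    apply ext_inner_left ℂ
    intro ξ
    rw [comp_apply, adjoint_inner_right]
    exact hinner ξ η
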